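/- If η_1, η_2, η_3, η_4 are roots of unity with η_1 + η_2 + η_3 + η_4 = 0, then the four terms split into two vanishing pairs: there is a partition of {1,2,3,4} into two two-element sets {i_1,i_2} and {i_3,i_4} with η_{i_1} + η_{i_2} = 0 and η_{i_3} + η_{i_4} = 0. In particular, there is no minimal vanishing sum of roots of unity (with all coefficients equal to 1) of length 4. -/

import Mathlib

/-- A complex number is a root of unity. -/
def IsRootOfUnity (z : ℂ) : Prop := ∃ n : ℕ, 0 < n ∧ z ^ n = 1

/-- A vanishing sum of four roots of unity splits into two vanishing pairs; in
particular there is no minimal vanishing sum of roots of unity (with all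
coefficients equal to `1`) of length four. -/
theorem vanishing_sum_length_four_splits (η : Fin 4 → ℂ)
    (hη : ∀ i, IsRootOfUnity (η i))
    (hsum : η 0 + η 1 + η 2 + η 3 = 0) :
    ((η 0 + η 1 = 0 ∧ η 2 + η 3 = 0) ∨
     (η 0 + η 2 = 0 ∧ η 1 + η 3 = 0) ∨
     (η 0 + η 3 = 0 ∧ η 1 + η 2 = 0)) ∧
    ∃ S : Finset (Fin 4), S.Nonempty ∧ S ≠ Finset.univ ∧ ∑ i ∈ S, η i = 0 := by
  have key : ∀ z : ℂ, IsRootOfUnity z → z * (starRingEnd ℂ) z = 1 := by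
    rintro z ⟨n, hn, hz⟩
    have h1 : ‖z‖ ^ n = 1 := by
      rw [← norm_pow, hz, norm_one]
    have h0 : 0 ≤ ‖z‖ := norm_nonneg z
    have h2 : ‖z‖ = 1 := by
      rcases lt_trichotomy ‖z‖ 1 with h | h | h
      · exact absurd h1 (pow_lt_one₀ h0 h hn.ne').ne
      · exact h
      · exact absurd h1 (one_lt_pow₀ h hn.ne').ne' 
    rw [Complex.mul_conj, Complex.normSq_eq_norm_sq, h2]
    norm_num
  have ha := key _ (hη 0); have hb := key _ (hη 1)
  have hc := key _ (hη 2); have hd := key _ (hη 3)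
  set a := η 0; set b := η 1; set c := η 2; set d := η 3
  have main : (a + b = 0 ∧ c + d = 0) ∨ (a + c = 0 ∧ b + d = 0) ∨
      (a + d = 0 ∧ b + c = 0) := by
    by_cases hs : a + b = 0
    · exact Or.inl ⟨hs, by linear_combination hsum - hs⟩
    · have h1 : (starRingEnd ℂ) (a + b) * (a * b) = a + b := by
        rw [map_add]; linear_combination b * ha + a * hb
      have hconj : (starRingEnd ℂ) (a + b) =
          -((starRingEnd ℂ) c + (starRingEnd ℂ) d) := by
        rw [show a + b = -(c + d) by linear_combination hsum, map_neg, map_add]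
      have h2 : (starRingEnd ℂ) (a + b) * (c * d) = a + b := by
        rw [hconj]; linear_combination -d * hc - c * hd - hsum
      have hcne : (starRingEnd ℂ) (a + b) ≠ 0 := by
        intro h
        apply hs
        have := congrArg (starRingEnd ℂ) h
        simpa using this
      have hpq : a * b = c * d := mul_left_cancel₀ hcne (h1.trans h2.symm)
      have hfac : (a + c) * (b + c) = 0 := by linear_combination hpq + c * hsum
      rcases mul_eq_zero.mp hfac with h | h
      · exact Or.inr (Or.inl ⟨h, by linear_combination hsum - h⟩)
      · exact Or.inr (Or.inr ⟨by linear_combination hsum - h, h⟩)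
  refine ⟨main, ?_⟩
  rcases main with ⟨h, _⟩ | ⟨h, _⟩ | ⟨h, _⟩
  · exact ⟨{0, 1}, ⟨0, by decide⟩, by decide, by rw [Finset.sum_pair (by decide)]; exact h⟩
  · exact ⟨{0, 2}, ⟨0, by decide⟩, by decide, by rw [Finset.sum_pair (by decide)]; exact h⟩
  · exact ⟨{0, 3}, ⟨0, by decide⟩, by decide, by rw [Finset.sum_pair (by decide)]; exact h⟩
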